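/- Let k ≥ 2, let S be a permutation-invariant Markov operator on L²(X^k, μ^{⊗k}), and set N := I ∘ F. If N ∘ S = S ∘ N, then: (1) S ∘ I = I ∘ S↓; (2) F ∘ S = S↓ ∘ F; and (3) N' ∘ S↓ = S↓ ∘ N', where N' is the analogous operator on L²(X^{k-1}, μ^{⊗(k-1)}) averaging the (k−1)-st coordinate, (N' h)(x₁,…,x_{k-1}) = ∫_X h(x₁,…,x_{k-2}, y) dμ(y). -/

import Mathlib

open MeasureTheory

noncomputable section

/-- The constant-one function as an element of `L²` of a finite measure. -/
noncomputable def lpOne {Z : Type*} [MeasurableSpace Z] (ν : Measure Z)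
    [IsFiniteMeasure ν] : Lp ℝ 2 ν :=
  Lp.const 2 ν (1 : ℝ)

/-- A Markov operator on `L²`: positivity-preserving, fixing the constants, with adjoint
fixing the constants. -/
def IsMarkovOp {Z : Type*} [MeasurableSpace Z] (ν : Measure Z) [IsFiniteMeasure ν]
    (S : Lp ℝ 2 ν →L[ℝ] Lp ℝ 2 ν) : Prop :=
  (∀ f : Lp ℝ 2 ν, (0 : Z → ℝ) ≤ᵐ[ν] ⇑f → (0 : Z → ℝ) ≤ᵐ[ν] ⇑(S f)) ∧
    S (lpOne ν) = lpOne ν ∧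
    ContinuousLinearMap.adjoint S (lpOne ν) = lpOne ν

/-- An operator on `L²(X^k, μ^{⊗k})` is permutation invariant if it commutes with the
Koopman operator of every coordinate permutation: whenever `g` is (a.e.) the Koopman image
`f ∘ π` of `f`, then `S g` is the Koopman image of `S f`. -/
def PermInv {X : Type*} [MeasurableSpace X] {k : ℕ} (ν : Measure (Fin k → X))
    (S : Lp ℝ 2 ν →L[ℝ] Lp ℝ 2 ν) : Prop :=
  ∀ (π : Equiv.Perm (Fin k)) (f g : Lp ℝ 2 ν),
    (⇑g =ᵐ[ν] fun x => f (fun i => x (π i))) →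
    (⇑(S g) =ᵐ[ν] fun x => (S f) (fun i => x (π i)))

namespace Stmt14Aux

variable {X : Type*} [MeasurableSpace X] (μ : Measure X) [IsProbabilityMeasure μ]

/-- The measurable equiv `(Fin n → X) × X ≃ᵐ (Fin (n+1) → X)` given by `Fin.snoc`. -/
def snocEquiv (n : ℕ) : ((Fin n → X) × X) ≃ᵐ (Fin (n + 1) → X) :=
  (MeasurableEquiv.prodComm).trans
    (MeasurableEquiv.piFinSuccAbove (fun _ => X) (Fin.last n)).symm

lemma snocEquiv_apply (n : ℕ) (p : (Fin n → X) × X) :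
    snocEquiv (X := X) n p = (Fin.snoc (α := fun _ => X) p.1 p.2) := by
  have h0 : snocEquiv (X := X) n p = (Fin.last n).insertNth p.2 p.1 := rfl
  rw [h0, Fin.insertNth_last']

lemma snocEquiv_coe (n : ℕ) :
    ⇑(snocEquiv (X := X) n) = fun p : (Fin n → X) × X => (Fin.snoc (α := fun _ => X) p.1 p.2) :=
  funext (snocEquiv_apply n)

lemma mp_snoc (n : ℕ) :
    MeasurePreserving (fun p : (Fin n → X) × X => (Fin.snoc (α := fun _ => X) p.1 p.2))
      ((Measure.pi fun _ : Fin n => μ).prod μ) (Measure.pi fun _ : Fin (n + 1) => μ) := by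
  rw [← snocEquiv_coe (X := X) n]
  have h1 := ((measurePreserving_piFinSuccAbove (fun _ : Fin (n + 1) => μ)
    (Fin.last n)).symm)
  have h2 : MeasurePreserving Prod.swap
      ((Measure.pi fun _ : Fin n => μ).prod μ)
      (μ.prod (Measure.pi fun _ : Fin n => μ)) := Measure.measurePreserving_swap
  have h3 := h1.comp h2
  convert h3 using 1
  rfl

lemma emb_snoc (n : ℕ) :
    MeasurableEmbedding (fun p : (Fin n → X) × X => (Fin.snoc (α := fun _ => X) p.1 p.2)) := by
  rw [← snocEquiv_coe (X := X) n]
  exact (snocEquiv (X := X) n).measurableEmbedding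

lemma qmp_cast (n : ℕ) :
    Measure.QuasiMeasurePreserving (fun (x : Fin (n + 1) → X) (j : Fin n) => x j.castSucc)
      (Measure.pi fun _ : Fin (n + 1) => μ) (Measure.pi fun _ : Fin n => μ) := by
  have h1 := (measurePreserving_piFinSuccAbove (fun _ : Fin (n + 1) => μ)
    (Fin.last n)).quasiMeasurePreserving
  have h2 : Measure.QuasiMeasurePreserving (Prod.snd : X × (Fin n → X) → (Fin n → X))
      (μ.prod (Measure.pi fun _ : Fin n => μ)) (Measure.pi fun _ : Fin n => μ) :=
    Measure.quasiMeasurePreserving_snd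
  have h3 := h2.comp h1
  convert h3 using 1
  funext x
  show (fun j => x j.castSucc) = fun j => x ((Fin.last n).succAbove j)
  simp [Fin.succAbove_last]

lemma ae_cast_of_ae {n : ℕ} {f g : (Fin n → X) → ℝ}
    (h : f =ᵐ[Measure.pi fun _ : Fin n => μ] g) :
    (fun x : Fin (n + 1) → X => f (fun j => x j.castSucc))
      =ᵐ[Measure.pi fun _ : Fin (n + 1) => μ]
    (fun x => g (fun j => x j.castSucc)) :=
  (qmp_cast μ n).ae_eq_comp h

lemma ae_snoc_of_ae {n : ℕ} {f g : (Fin (n + 1) → X) → ℝ}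
    (h : f =ᵐ[Measure.pi fun _ : Fin (n + 1) => μ] g) :
    ∀ᵐ z ∂(Measure.pi fun _ : Fin n => μ), ∀ᵐ y ∂μ,
      f (Fin.snoc (α := fun _ => X) z y) = g (Fin.snoc z y) := by
  have h' := (mp_snoc μ n).quasiMeasurePreserving.ae_eq_comp h
  exact Measure.ae_ae_of_ae_prod h'

lemma adjoint_formula {n : ℕ}
    (K : Lp ℝ 2 (Measure.pi fun _ : Fin n => μ) →L[ℝ]
      Lp ℝ 2 (Measure.pi fun _ : Fin (n + 1) => μ))
    (hK : ∀ f, ⇑(K f) =ᵐ[Measure.pi fun _ : Fin (n + 1) => μ]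
      fun x => f (fun j : Fin n => x j.castSucc))
    (g : Lp ℝ 2 (Measure.pi fun _ : Fin (n + 1) => μ)) :
    ⇑(ContinuousLinearMap.adjoint K g) =ᵐ[Measure.pi fun _ : Fin n => μ]
      fun z => ∫ y, g (Fin.snoc (α := fun _ => X) z y) ∂μ := by
  have hg : Integrable (⇑g) (Measure.pi fun _ : Fin (n + 1) => μ) := MemLp.integrable one_le_two (Lp.memLp g)
  have hgs : Integrable (fun p : (Fin n → X) × X =>
      g (Fin.snoc (α := fun _ => X) p.1 p.2)) ((Measure.pi fun _ : Fin n => μ).prod μ) :=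
    ((mp_snoc μ n).integrable_comp_emb (emb_snoc (X := X) n)).mpr hg
  have hG : Integrable (fun z => ∫ y, g (Fin.snoc (α := fun _ => X) z y) ∂μ) (Measure.pi fun _ : Fin n => μ) :=
    hgs.integral_prod_left
  have hw : Integrable (⇑(ContinuousLinearMap.adjoint K g)) (Measure.pi fun _ : Fin n => μ) :=
    MemLp.integrable one_le_two (Lp.memLp _)
  refine hw.ae_eq_of_forall_setIntegral_eq _ _ hG ?_
  intro A hA hAfin
  set ind : Lp ℝ 2 (Measure.pi fun _ : Fin n => μ) := indicatorConstLp 2 hA hAfin.ne (1 : ℝ) with hind_def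
  have hKind : ⇑(K ind) =ᵐ[(Measure.pi fun _ : Fin (n + 1) => μ)]
      fun x => A.indicator (fun _ => (1 : ℝ)) (fun j : Fin n => x j.castSucc) := by
    refine (hK ind).trans ?_
    exact ae_cast_of_ae μ (indicatorConstLp_coeFn (p := 2) (μ := (Measure.pi fun _ : Fin n => μ)))
  have step1 : ∫ z in A, (ContinuousLinearMap.adjoint K g) z ∂(Measure.pi fun _ : Fin n => μ) = @inner ℝ _ _ (K ind) g := by
    rw [← ContinuousLinearMap.adjoint_inner_right,
      L2.inner_indicatorConstLp_one (𝕜 := ℝ) hA hAfin.ne]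
  have step2 : @inner ℝ _ _ (K ind) g
      = ∫ x, A.indicator (fun _ => (1 : ℝ)) (fun j : Fin n => x j.castSucc) * g x ∂(Measure.pi fun _ : Fin (n + 1) => μ) := by
    rw [L2.inner_def]
    refine integral_congr_ae ?_
    filter_upwards [hKind] with x hx
    simp [RCLike.inner_apply, hx]
    ring
  have step3 : ∫ x, A.indicator (fun _ => (1 : ℝ)) (fun j : Fin n => x j.castSucc) * g x ∂(Measure.pi fun _ : Fin (n + 1) => μ)
      = ∫ p : (Fin n → X) × X, A.indicator (fun _ => (1 : ℝ)) p.1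
          * g (Fin.snoc (α := fun _ => X) p.1 p.2) ∂((Measure.pi fun _ : Fin n => μ).prod μ) := by
    rw [← (mp_snoc μ n).integral_comp (emb_snoc (X := X) n)
      (fun x => A.indicator (fun _ => (1 : ℝ)) (fun j : Fin n => x j.castSucc) * g x)]
    refine integral_congr_ae (Filter.Eventually.of_forall fun p => ?_)
    simp [Fin.snoc_castSucc]
  have hint : Integrable (fun p : (Fin n → X) × X => A.indicator (fun _ => (1 : ℝ)) p.1
      * g (Fin.snoc (α := fun _ => X) p.1 p.2)) ((Measure.pi fun _ : Fin n => μ).prod μ) := by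
    refine hgs.bdd_mul (c := 1) ?_ (Filter.Eventually.of_forall fun p => ?_)
    · exact ((measurable_const.indicator hA).comp measurable_fst).aestronglyMeasurable
    · by_cases hp : p.1 ∈ A <;> simp [Set.indicator_apply, hp]
  have step4 : ∫ p : (Fin n → X) × X, A.indicator (fun _ => (1 : ℝ)) p.1
        * g (Fin.snoc (α := fun _ => X) p.1 p.2) ∂((Measure.pi fun _ : Fin n => μ).prod μ)
      = ∫ z, A.indicator (fun _ => (1 : ℝ)) z
          * ∫ y, g (Fin.snoc (α := fun _ => X) z y) ∂μ ∂(Measure.pi fun _ : Fin n => μ) := by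
    rw [integral_prod _ hint]
    refine integral_congr_ae (Filter.Eventually.of_forall fun z => ?_)
    simp only [integral_const_mul]
  have step5 : ∫ z, A.indicator (fun _ => (1 : ℝ)) z
        * ∫ y, g (Fin.snoc (α := fun _ => X) z y) ∂μ ∂(Measure.pi fun _ : Fin n => μ)
      = ∫ z in A, ∫ y, g (Fin.snoc (α := fun _ => X) z y) ∂μ ∂(Measure.pi fun _ : Fin n => μ) := by
    rw [← integral_indicator hA]
    refine integral_congr_ae (Filter.Eventually.of_forall fun z => ?_)
    by_cases hz : z ∈ A <;> simp [Set.indicator_apply, hz]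
  rw [step1, step2, step3, step4, step5]

lemma adjoint_comp_self {n : ℕ}
    (K : Lp ℝ 2 (Measure.pi fun _ : Fin n => μ) →L[ℝ]
      Lp ℝ 2 (Measure.pi fun _ : Fin (n + 1) => μ))
    (hK : ∀ f, ⇑(K f) =ᵐ[Measure.pi fun _ : Fin (n + 1) => μ]
      fun x => f (fun j : Fin n => x j.castSucc))
    (f : Lp ℝ 2 (Measure.pi fun _ : Fin n => μ)) :
    ContinuousLinearMap.adjoint K (K f) = f := by
  refine Lp.ext ((adjoint_formula μ K hK (K f)).trans ?_)
  filter_upwards [ae_snoc_of_ae μ (hK f)] with z hz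
  have h1 : ∫ y, (K f) (Fin.snoc z y) ∂μ = ∫ _y : X, f z ∂μ := by
    refine integral_congr_ae (hz.mono fun y hy => ?_)
    have h2 : (fun j : Fin n => (Fin.snoc (α := fun _ => X) z y) j.castSucc) = z := by
      funext j
      simp
    simp only [hy, h2]
  rw [h1]
  simp

lemma perm_eq (k : ℕ) (π : Equiv.Perm (Fin k)) :
    (fun (x : Fin k → X) (i : Fin k) => x (π i))
      = ⇑(MeasurableEquiv.piCongrLeft (fun _ => X) π).symm := by
  funext x
  have h : ⇑(MeasurableEquiv.piCongrLeft (fun _ : Fin k => X) π).symm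
      = ⇑(Equiv.piCongrLeft (fun _ : Fin k => X) π).symm := rfl
  rw [h]
  funext i
  rw [Equiv.piCongrLeft_symm_apply]

lemma mp_perm (k : ℕ) (π : Equiv.Perm (Fin k)) :
    MeasurePreserving (fun (x : Fin k → X) (i : Fin k) => x (π i))
      (Measure.pi fun _ : Fin k => μ) (Measure.pi fun _ : Fin k => μ) := by
  rw [perm_eq]
  exact (measurePreserving_piCongrLeft (fun _ : Fin k => μ) π).symm

lemma emb_perm (k : ℕ) (π : Equiv.Perm (Fin k)) :
    MeasurableEmbedding (fun (x : Fin k → X) (i : Fin k) => x (π i)) := by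
  rw [perm_eq]
  exact (MeasurableEquiv.piCongrLeft (fun _ => X) π).symm.measurableEmbedding

end Stmt14Aux

set_option maxHeartbeats 1000000 in
/-- (Here `k = m + 2 ≥ 2`.)  Let `S` be a permutation-invariant Markov
operator on `L²(X^k, μ^{⊗k})`, let `I : L²(X^{k-1}) → L²(X^k)` be the operator ignoring the
last coordinate (`(I f)(x₁,…,x_k) = f(x₁,…,x_{k-1})`), `F := I*` and `N := I ∘ F`.  If
`N ∘ S = S ∘ N`, then `S ∘ I = I ∘ S↓`, `F ∘ S = S↓ ∘ F` and `N' ∘ S↓ = S↓ ∘ N'`, where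
`S↓ = F ∘ S ∘ I` and `N' = I' ∘ I'*` is the analogous averaging operator on
`L²(X^{k-1})`. -/
theorem stmt14 {X : Type*} [MeasurableSpace X] (μ : Measure X) [IsProbabilityMeasure μ]
    (m : ℕ)
    (I : Lp ℝ 2 (Measure.pi fun _ : Fin (m + 1) => μ) →L[ℝ]
      Lp ℝ 2 (Measure.pi fun _ : Fin (m + 2) => μ))
    (hI : ∀ f : Lp ℝ 2 (Measure.pi fun _ : Fin (m + 1) => μ),
      ⇑(I f) =ᵐ[Measure.pi fun _ : Fin (m + 2) => μ]
        fun x => f (fun i : Fin (m + 1) => x i.castSucc))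
    (I' : Lp ℝ 2 (Measure.pi fun _ : Fin m => μ) →L[ℝ]
      Lp ℝ 2 (Measure.pi fun _ : Fin (m + 1) => μ))
    (hI' : ∀ f : Lp ℝ 2 (Measure.pi fun _ : Fin m => μ),
      ⇑(I' f) =ᵐ[Measure.pi fun _ : Fin (m + 1) => μ]
        fun x => f (fun i : Fin m => x i.castSucc))
    (S : Lp ℝ 2 (Measure.pi fun _ : Fin (m + 2) => μ) →L[ℝ]
      Lp ℝ 2 (Measure.pi fun _ : Fin (m + 2) => μ))
    (hSM : IsMarkovOp (Measure.pi fun _ : Fin (m + 2) => μ) S)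
    (hSP : PermInv (Measure.pi fun _ : Fin (m + 2) => μ) S)
    (hN : (I ∘L ContinuousLinearMap.adjoint I) ∘L S =
      S ∘L (I ∘L ContinuousLinearMap.adjoint I)) :
    (S ∘L I = I ∘L (ContinuousLinearMap.adjoint I ∘L S ∘L I)) ∧
    (ContinuousLinearMap.adjoint I ∘L S =
      (ContinuousLinearMap.adjoint I ∘L S ∘L I) ∘L ContinuousLinearMap.adjoint I) ∧
    ((I' ∘L ContinuousLinearMap.adjoint I') ∘L
        (ContinuousLinearMap.adjoint I ∘L S ∘L I) =
      (ContinuousLinearMap.adjoint I ∘L S ∘L I) ∘L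
        (I' ∘L ContinuousLinearMap.adjoint I')) := by
  have hFI : ∀ f, ContinuousLinearMap.adjoint I (I f) = f :=
    Stmt14Aux.adjoint_comp_self μ I hI
  have e2 : ∀ g, I (ContinuousLinearMap.adjoint I (S g))
      = S (I (ContinuousLinearMap.adjoint I g)) := by
    intro g
    have h := ContinuousLinearMap.ext_iff.mp hN g
    simpa using h
  set τ : Equiv.Perm (Fin (m + 2)) := Equiv.swap ((Fin.last m).castSucc) (Fin.last (m + 1))
    with hτ
  have mpk := Stmt14Aux.mp_perm μ (m + 2) τ
  set T : Lp ℝ 2 (Measure.pi fun _ : Fin (m + 2) => μ) →L[ℝ]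
      Lp ℝ 2 (Measure.pi fun _ : Fin (m + 2) => μ) :=
    (Lp.compMeasurePreservingₗᵢ ℝ (fun (x : Fin (m + 2) → X) (i : Fin (m + 2)) => x (τ i))
      mpk).toContinuousLinearMap with hT_def
  have hT : ∀ g, ⇑(T g) =ᵐ[Measure.pi fun _ : Fin (m + 2) => μ]
      fun x => g (fun i => x (τ i)) := fun g => Lp.coeFn_compMeasurePreserving g mpk
  have e3 : ∀ v, S (T v) = T (S v) := fun v =>
    Lp.ext ((hSP τ v (T v) (hT v)).trans (hT (S v)).symm)
  have Eq1 : ∀ h : Lp ℝ 2 (Measure.pi fun _ : Fin (m + 1) => μ),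
      ContinuousLinearMap.adjoint I (T (I h)) = I' (ContinuousLinearMap.adjoint I' h) := by
    intro h
    refine Lp.ext ?_
    have hB : ⇑(T (I h)) =ᵐ[Measure.pi fun _ : Fin (m + 2) => μ]
        fun x => h (fun i : Fin (m + 1) => x (τ i.castSucc)) := by
      refine (hT (I h)).trans ?_
      have h2 := mpk.quasiMeasurePreserving.ae_eq_comp (hI h)
      exact h2
    have hkey : ∀ (z : Fin (m + 1) → X) (y : X),
        (fun i : Fin (m + 1) => (Fin.snoc (α := fun _ => X) z y) (τ i.castSucc))
          = Fin.snoc (α := fun _ => X) (fun j : Fin m => z j.castSucc) y := by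
      intro z y
      funext i
      refine Fin.lastCases ?_ ?_ i
      · rw [show τ ((Fin.last m).castSucc) = Fin.last (m + 1) from Equiv.swap_apply_left _ _]
        simp
      · intro j
        have h1 : τ (j.castSucc.castSucc) = j.castSucc.castSucc := by
          refine Equiv.swap_apply_of_ne_of_ne ?_ ?_
          · exact fun hcon => absurd (Fin.castSucc_injective _ hcon)
              (Fin.castSucc_lt_last j).ne
          · exact (Fin.castSucc_lt_last _).ne
        rw [h1]
        simp
    have hL : ⇑(ContinuousLinearMap.adjoint I (T (I h)))
        =ᵐ[Measure.pi fun _ : Fin (m + 1) => μ]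
        fun z => ∫ y, h (Fin.snoc (α := fun _ => X) (fun j : Fin m => z j.castSucc) y) ∂μ := by
      refine (Stmt14Aux.adjoint_formula μ I hI (T (I h))).trans ?_
      filter_upwards [Stmt14Aux.ae_snoc_of_ae μ hB] with z hz
      refine integral_congr_ae (hz.mono fun y hy => ?_)
      simp only [hy, hkey z y]
    have hR : ⇑(I' (ContinuousLinearMap.adjoint I' h))
        =ᵐ[Measure.pi fun _ : Fin (m + 1) => μ]
        fun z => ∫ y, h (Fin.snoc (α := fun _ => X) (fun j : Fin m => z j.castSucc) y) ∂μ := by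
      refine (hI' _).trans ?_
      have h3 := Stmt14Aux.ae_cast_of_ae μ (Stmt14Aux.adjoint_formula μ I' hI' h)
      exact h3
    exact hL.trans hR.symm
  refine ⟨?_, ?_, ?_⟩
  · ext f
    simp only [ContinuousLinearMap.comp_apply]
    rw [e2 (I f), hFI]
  · ext g
    simp only [ContinuousLinearMap.comp_apply]
    rw [← e2 g, hFI]
  · ext h
    simp only [ContinuousLinearMap.comp_apply]
    rw [← Eq1 (ContinuousLinearMap.adjoint I (S (I h))), ← Eq1 h, e2 (I h), hFI,
      ← e2 (T (I h)), hFI, ← e3 (I h)]
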